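/- Let r_a, v_max, h > 0 and set r' = √(4·r_a² + h²·v_max²). If x, y ∈ ℝ³ satisfy ‖x‖ ≥ r', ‖y‖ ≥ r' and ‖x − y‖ ≤ 2·h·v_max, then for every t ∈ [0, 1] the point (1 − t)·x + t·y on the segment from x to y satisfies ‖(1 − t)·x + t·y‖ ≥ 2·r_a. (Hence if the relative position of two agents has norm at least r' at two consecutive sampling instants, and each agent moves at most h·v_max between the instants, the agents remain at distance at least 2·r_a along the interpolated motion.) -/

import Mathlib

/-- If the relative position has norm at least
`r' = √(4 r_a² + h² v_max²)` at two consecutive instants and changes by at most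
`2 h v_max`, the interpolated relative position keeps norm at least `2 r_a`. -/
theorem interpolated_separation (ra vmax h : ℝ) (hra : 0 < ra) (hv : 0 < vmax) (hh : 0 < h)
    (r' : ℝ) (hr' : r' = Real.sqrt (4 * ra ^ 2 + h ^ 2 * vmax ^ 2))
    (x y : EuclideanSpace ℝ (Fin 3)) (hx : ‖x‖ ≥ r') (hy : ‖y‖ ≥ r')
    (hxy : ‖x - y‖ ≤ 2 * h * vmax) :
    ∀ t ∈ Set.Icc (0 : ℝ) 1, ‖(1 - t) • x + t • y‖ ≥ 2 * ra := by
  intro t ht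
  obtain ⟨ht0, ht1⟩ := ht
  have hsum : (0:ℝ) ≤ 4 * ra ^ 2 + h ^ 2 * vmax ^ 2 := by positivity
  have hr'sq : r' ^ 2 = 4 * ra ^ 2 + h ^ 2 * vmax ^ 2 := by
    rw [hr', Real.sq_sqrt hsum]
  have hr'pos : 0 < r' := by
    rw [hr']; exact Real.sqrt_pos.mpr (by positivity)
  have hx2 : ‖x‖ ^ 2 ≥ r' ^ 2 := by
    have := pow_le_pow_left₀ (le_of_lt hr'pos) hx 2
    linarith
  have hy2 : ‖y‖ ^ 2 ≥ r' ^ 2 := by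
    have := pow_le_pow_left₀ (le_of_lt hr'pos) hy 2
    linarith
  have hxy2 : ‖x - y‖ ^ 2 ≤ (2 * h * vmax) ^ 2 := by
    have := pow_le_pow_left₀ (norm_nonneg (x - y)) hxy 2
    linarith
  have key : ‖(1 - t) • x + t • y‖ ^ 2 =
      (1 - t) * ‖x‖ ^ 2 + t * ‖y‖ ^ 2 - t * (1 - t) * ‖x - y‖ ^ 2 := by
    have e1 : ‖(1 - t) • x + t • y‖ ^ 2 = inner ℝ ((1 - t) • x + t • y) ((1 - t) • x + t • y) :=
      (real_inner_self_eq_norm_sq _).symm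
    have e2 : ‖x‖ ^ 2 = inner ℝ x x := (real_inner_self_eq_norm_sq x).symm
    have e3 : ‖y‖ ^ 2 = inner ℝ y y := (real_inner_self_eq_norm_sq y).symm
    have e4 : ‖x - y‖ ^ 2 = inner ℝ (x - y) (x - y) := (real_inner_self_eq_norm_sq (x - y)).symm
    rw [e1, e2, e3, e4]
    simp only [inner_add_add_self, inner_sub_sub_self, inner_smul_left, inner_smul_right,
      real_inner_comm x y, RCLike.conj_to_real]
    ring
  have hzsq : ‖(1 - t) • x + t • y‖ ^ 2 ≥ (2 * ra) ^ 2 := by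
    have ht' : t * (1 - t) ≤ 1 / 4 := by nlinarith [sq_nonneg (2 * t - 1)]
    have hne : 0 ≤ t * (1 - t) := by nlinarith
    nlinarith [mul_le_mul ht' hxy2 (by positivity : (0:ℝ) ≤ ‖x - y‖ ^ 2) (by norm_num : (0:ℝ) ≤ 1/4), mul_nonneg hne (sq_nonneg ‖x - y‖)]
  nlinarith [norm_nonneg ((1 - t) • x + t • y), hra]
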